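/- Let f : W → V be a p-morphism between Kripke frames. Define U = {(v,i) ∈ V × {0,1} | if i = 0 then v ∉ range(f)}, with relation (v,i) ≺ (v',i') iff v ≺ v' and (i = i' or (i < i' and v' ∈ range(f))); define ι₁ : V → U by ι₁(v) = (v,1), and ι₀ : V → U by ι₀(v) = (v,0) if v ∉ range(f) and ι₀(v) = (v,1) if v ∈ range(f). Then: (i) ι₀ and ι₁ are p-morphisms; (ii) ι₀ ∘ f = ι₁ ∘ f; (iii) the pair (ι₀, ι₁) is the cokernel pair (pushout of f along itself) of f in the category of Kripke frames and p-morphisms; (iv) {v ∈ V | ι₀(v) = ι₁(v)} = range(f); (v) U is a surjective p-morphic image of the disjoint union V ⊔ V. -/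
import Mathlib


/-- A p-morphism between Kripke frames `(W, rW)` and `(V, rV)`:
a function that is stable and open. -/
def IsPMorphism {W V : Type*} (rW : W → W → Prop) (rV : V → V → Prop) (f : W → V) : Prop :=
  (∀ ⦃w w'⦄, rW w w' → rV (f w) (f w')) ∧
  (∀ w v', rV (f w) v' → ∃ w', rW w w' ∧ f w' = v')

/-- The underlying set `U = {(v,i) ∈ V × {0,1} | i = 0 → v ∉ range f}` of the cokernel
pair of `f` (we encode `0` as `false` and `1` as `true`). -/
def Cok {W V : Type*} (f : W → V) : Type _ :=
  {p : V × Bool // p.2 = false → p.1 ∉ Set.range f}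

/-- The relation on `U`: `(v,i) ≺ (v',i')` iff `v ≺ v'` and
(`i = i'` or (`i < i'` and `v' ∈ range f`)). -/
def cokRel {W V : Type*} (rV : V → V → Prop) (f : W → V) : Cok f → Cok f → Prop :=
  fun a b => rV a.1.1 b.1.1 ∧ (a.1.2 = b.1.2 ∨ (a.1.2 < b.1.2 ∧ b.1.1 ∈ Set.range f))

/-- `ι₁ : V → U`, `v ↦ (v, 1)`. -/
def iota1 {W V : Type*} (f : W → V) : V → Cok f :=
  fun v => ⟨(v, true), by simp⟩

open Classical in
/-- `ι₀ : V → U`, sending `v` to `(v,0)` if `v ∉ range f` and to `(v,1)` otherwise. -/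
noncomputable def iota0 {W V : Type*} (f : W → V) : V → Cok f :=
  fun v => if h : v ∈ Set.range f then ⟨(v, true), by simp⟩ else ⟨(v, false), fun _ => h⟩

lemma iota0_mem {W V : Type*} {f : W → V} {v : V} (h : v ∈ Set.range f) :
    iota0 f v = ⟨(v, true), by simp⟩ := dif_pos h

lemma iota0_not_mem {W V : Type*} {f : W → V} {v : V} (h : v ∉ Set.range f) :
    iota0 f v = ⟨(v, false), fun _ => h⟩ := dif_neg h

lemma iota0_eq_iota1 {W V : Type*} {f : W → V} {v : V} (h : v ∈ Set.range f) :
    iota0 f v = iota1 f v := by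
  rw [iota0_mem h]; rfl

/-- For a p-morphism `f : W → V`: (i) `ι₀` and `ι₁` are p-morphisms;
(ii) `ι₀ ∘ f = ι₁ ∘ f`; (iii) `(ι₀, ι₁)` is the cokernel pair (the pushout of `f`
along itself) in the category of Kripke frames and p-morphisms;
(iv) `{v | ι₀ v = ι₁ v} = range f`; (v) `U` is a surjective p-morphic image of the
disjoint union `V ⊔ V` (equipped with the disjoint union of the relations). -/
theorem statement1 {W V : Type*} (rW : W → W → Prop) (rV : V → V → Prop)
    (f : W → V) (hf : IsPMorphism rW rV f) :
    -- (i)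
    IsPMorphism rV (cokRel rV f) (iota0 f) ∧
    IsPMorphism rV (cokRel rV f) (iota1 f) ∧
    -- (ii)
    iota0 f ∘ f = iota1 f ∘ f ∧
    -- (iii) universal property of the pushout of `f` along itself
    (∀ (Z : Type*) (rZ : Z → Z → Prop) (k₀ k₁ : V → Z),
      IsPMorphism rV rZ k₀ → IsPMorphism rV rZ k₁ → k₀ ∘ f = k₁ ∘ f →
      ∃! u : Cok f → Z,
        IsPMorphism (cokRel rV f) rZ u ∧ u ∘ iota0 f = k₀ ∧ u ∘ iota1 f = k₁) ∧
    -- (iv)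
    {v | iota0 f v = iota1 f v} = Set.range f ∧
    -- (v)
    (∃ q : V ⊕ V → Cok f,
      IsPMorphism (Sum.LiftRel rV rV) (cokRel rV f) q ∧ Function.Surjective q) := by
  classical
  obtain ⟨hst, hop⟩ := hf
  have hflt : (false : Bool) < true := by decide
  have hntlt : ∀ b : Bool, ¬ ((true : Bool) < b) := by decide
  -- ι₀ is a p-morphism
  have hi0 : IsPMorphism rV (cokRel rV f) (iota0 f) := by
    constructor
    · intro v v' h
      by_cases h' : v' ∈ Set.range f
      · by_cases hv : v ∈ Set.range f
        · rw [iota0_mem h', iota0_mem hv]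
          exact ⟨h, Or.inl rfl⟩
        · rw [iota0_mem h', iota0_not_mem hv]
          exact ⟨h, Or.inr ⟨hflt, h'⟩⟩
      · have hv : v ∉ Set.range f := by
          rintro ⟨w, rfl⟩
          obtain ⟨w', _, rfl⟩ := hop w v' h
          exact h' ⟨w', rfl⟩
        rw [iota0_not_mem h', iota0_not_mem hv]
        exact ⟨h, Or.inl rfl⟩
    · rintro v ⟨⟨v', b⟩, hb⟩ hrel
      have hrv : rV v v' := by
        by_cases hv : v ∈ Set.range f <;>
          [rw [iota0_mem hv] at hrel; rw [iota0_not_mem hv] at hrel] <;> exact hrel.1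
      refine ⟨v', hrv, ?_⟩
      cases b with
      | false => exact iota0_not_mem (hb rfl)
      | true =>
        have h' : v' ∈ Set.range f := by
          by_cases hv : v ∈ Set.range f
          · obtain ⟨w, rfl⟩ := hv
            obtain ⟨w', _, rfl⟩ := hop w v' hrv
            exact ⟨w', rfl⟩
          · rw [iota0_not_mem hv] at hrel
            rcases hrel.2 with h | h
            · exact absurd h Bool.false_ne_true
            · exact h.2
        exact iota0_mem h'
  -- ι₁ is a p-morphism
  have hi1 : IsPMorphism rV (cokRel rV f) (iota1 f) := by
    constructor
    · intro v v' h; exact ⟨h, Or.inl rfl⟩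
    · rintro v ⟨⟨v', b⟩, hb⟩ hrel
      have hb' : b = true := by
        rcases hrel.2 with h | h
        · exact h.symm
        · exact absurd h.1 (hntlt b)
      subst hb'
      exact ⟨v', hrel.1, rfl⟩
  have hcomm : iota0 f ∘ f = iota1 f ∘ f := by
    funext w
    exact iota0_eq_iota1 ⟨w, rfl⟩
  refine ⟨hi0, hi1, hcomm, ?_, ?_, ?_⟩
  · -- universal property
    intro Z rZ k₀ k₁ hk₀ hk₁ hk
    have hkr : ∀ v ∈ Set.range f, k₀ v = k₁ v := by
      rintro v ⟨w, rfl⟩; exact congrFun hk w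
    refine ⟨fun p => if p.1.2 = true then k₁ p.1.1 else k₀ p.1.1, ⟨?_, ?_, ?_⟩, ?_⟩
    · constructor
      · rintro ⟨⟨v, b⟩, hb⟩ ⟨⟨v', b'⟩, hb'⟩ ⟨hrv, hor⟩
        rcases hor with h | h
        · simp only at h; subst h
          cases b with
          | false =>
            show rZ (k₀ v) (k₀ v')
            exact hk₀.1 hrv
          | true =>
            show rZ (k₁ v) (k₁ v')
            exact hk₁.1 hrv
        · obtain ⟨hlt, hmem⟩ := h
          obtain ⟨rfl, rfl⟩ : b = false ∧ b' = true := Bool.lt_iff.mp hlt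
          show rZ (k₀ v) (k₁ v')
          rw [← hkr v' hmem]
          exact hk₀.1 hrv
      · rintro ⟨⟨v, b⟩, hb⟩ z hz
        cases b with
        | true =>
          obtain ⟨v', hrv, hkv⟩ := hk₁.2 v z hz
          exact ⟨⟨(v', true), by simp⟩, ⟨hrv, Or.inl rfl⟩, hkv⟩
        | false =>
          obtain ⟨v', hrv, hkv⟩ := hk₀.2 v z hz
          by_cases h' : v' ∈ Set.range f
          · refine ⟨⟨(v', true), by simp⟩, ⟨hrv, Or.inr ⟨hflt, h'⟩⟩, ?_⟩
            show k₁ v' = z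
            rw [← hkr v' h']
            exact hkv
          · exact ⟨⟨(v', false), fun _ => h'⟩, ⟨hrv, Or.inl rfl⟩, hkv⟩
    · funext v
      by_cases h : v ∈ Set.range f
      · show (fun p : Cok f => if p.1.2 = true then k₁ p.1.1 else k₀ p.1.1) (iota0 f v) = k₀ v
        rw [iota0_mem h]
        exact (hkr v h).symm
      · show (fun p : Cok f => if p.1.2 = true then k₁ p.1.1 else k₀ p.1.1) (iota0 f v) = k₀ v
        rw [iota0_not_mem h]
        simp
    · funext v; rfl
    · rintro u ⟨hu, hu0, hu1⟩
      funext p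
      obtain ⟨⟨v, b⟩, hb⟩ := p
      cases b with
      | true =>
        show u (iota1 f v) = k₁ v
        exact congrFun hu1 v
      | false =>
        have hv : v ∉ Set.range f := hb rfl
        have e : (⟨(v, false), hb⟩ : Cok f) = iota0 f v := by rw [iota0_not_mem hv]
        show u ⟨(v, false), hb⟩ = k₀ v
        rw [e]
        exact congrFun hu0 v
  · -- (iv)
    ext v
    simp only [Set.mem_setOf_eq]
    constructor
    · intro h
      by_contra hv
      rw [iota0_not_mem hv] at h
      exact Bool.false_ne_true (congrArg (fun p : Cok f => p.1.2) h)
    · exact iota0_eq_iota1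
  · -- (v)
    refine ⟨Sum.elim (iota0 f) (iota1 f), ⟨?_, ?_⟩, ?_⟩
    · rintro a a' (⟨h⟩ | ⟨h⟩)
      · exact hi0.1 h
      · exact hi1.1 h
    · rintro (v | v) b hrel
      · obtain ⟨v', hrv, hv'⟩ := hi0.2 v b hrel
        exact ⟨Sum.inl v', Sum.LiftRel.inl hrv, hv'⟩
      · obtain ⟨v', hrv, hv'⟩ := hi1.2 v b hrel
        exact ⟨Sum.inr v', Sum.LiftRel.inr hrv, hv'⟩
    · rintro ⟨⟨v, b⟩, hb⟩
      cases b with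
      | true => exact ⟨Sum.inr v, rfl⟩
      | false => exact ⟨Sum.inl v, by rw [show Sum.elim (iota0 f) (iota1 f) (Sum.inl v) = iota0 f v from rfl, iota0_not_mem (hb rfl)]⟩
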